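/- arXiv:1611.10057 — 2 statements merged into one kernel-verified Lean document; each statement's English description precedes it below -/
import Mathlib

section
/- Let u_s(x,t) = a_s · [(κ₁ e^{θ+iτ_s} + ς|κ₁|)/(κ₁* e^{θ} + ς|κ₁|)] where θ ∈ ℝ, e^{iτ_s} = (κ₁*+b_s)/(κ₁+b_s), ς = ±1, κ₁ = κ_R + iκ_I ∈ ℂ with κ₁ ≠ -b_s, b_s ∈ ℝ \ {0}, a_s ∈ ℝ. Then |u_s|² → a_s² as θ → ±∞, and at θ = 0 (the peak), |u_s|² = a_s²[1 + 2b_s κ_I²/((κ_R + ς|κ₁|)|κ₁+b_s|²)], provided κ_R + ς|κ₁| ≠ 0. -/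
open Filter Topology

/-- The dark/anti-dark soliton profile
`u(θ) = a(κ₁ e^{θ} e^{iτ} + ς|κ₁|)/(κ₁* e^{θ} + ς|κ₁|)` with `e^{iτ} = (κ₁*+b)/(κ₁+b)`
satisfies `|u|² → a²` as `θ → ±∞` and
`|u(0)|² = a²(1 + 2bκ_I²/((κ_R + ς|κ₁|)|κ₁+b|²))`. -/
theorem stmt11 (a b : ℝ) (hb : b ≠ 0) (ς : ℝ) (hς : ς = 1 ∨ ς = -1)
    (κ : ℂ) (hκb : κ + (b : ℂ) ≠ 0)
    (hpeak : κ.re + ς * ‖κ‖ ≠ 0)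
    (u : ℝ → ℂ)
    (hu : ∀ θ : ℝ, u θ =
      (a : ℂ) * (κ * Real.exp θ * (((starRingEnd ℂ) κ + b) / (κ + b))
          + (ς : ℂ) * (‖κ‖ : ℂ))
        / ((starRingEnd ℂ) κ * Real.exp θ + (ς : ℂ) * (‖κ‖ : ℂ))) :
    Tendsto (fun θ => Complex.normSq (u θ)) atTop (nhds (a ^ 2)) ∧
    Tendsto (fun θ => Complex.normSq (u θ)) atBot (nhds (a ^ 2)) ∧
    Complex.normSq (u 0)
      = a ^ 2 * (1 + 2 * b * (κ.im) ^ 2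
          / ((κ.re + ς * ‖κ‖) * (‖κ + b‖) ^ 2)) := by
  have hκ : κ ≠ 0 := by
    intro h; apply hpeak; simp [h]
  have hr : ‖κ‖ ≠ 0 := by simpa using hκ
  have hςne : ς ≠ 0 := by rcases hς with h | h <;> simp [h]
  have hς2 : ς ^ 2 = 1 := by rcases hς with h | h <;> simp [h]
  set r : ℝ := ‖κ‖ with hrdef
  set c : ℂ := ((starRingEnd ℂ) κ + b) / (κ + b) with hc
  have hconjb : (starRingEnd ℂ) κ + (b : ℂ) = (starRingEnd ℂ) (κ + b) := by
    simp [map_add, Complex.conj_ofReal]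
  have hnκb : Complex.normSq (κ + b) ≠ 0 := by
    exact (Complex.normSq_pos.mpr hκb).ne'
  have hnc : Complex.normSq c = 1 := by
    rw [hc, Complex.normSq_div, hconjb, Complex.normSq_conj, div_self hnκb]
  have hconjκ : (starRingEnd ℂ) κ ≠ 0 := by simpa using hκ
  have hden0 : (ς : ℂ) * (r : ℂ) ≠ 0 := by simp [hςne, hr]
  have hnκ : Complex.normSq κ ≠ 0 := (Complex.normSq_pos.mpr hκ).ne'
  set F : ℝ → ℝ := fun t => Complex.normSq ((a : ℂ) * (κ * c + (ς : ℂ) * (r : ℂ) * t)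
      / ((starRingEnd ℂ) κ + (ς : ℂ) * (r : ℂ) * t)) with hF
  set G : ℝ → ℝ := fun t => Complex.normSq ((a : ℂ) * (κ * t * c + (ς : ℂ) * (r : ℂ))
      / ((starRingEnd ℂ) κ * t + (ς : ℂ) * (r : ℂ))) with hG
  refine ⟨?_, ?_, ?_⟩
  · -- atTop
    have key : ∀ θ : ℝ, Complex.normSq (u θ) = F (Real.exp (-θ)) := by
      intro θ
      have he : (Real.exp θ : ℂ) ≠ 0 := by simpa using Real.exp_ne_zero θ
      have hcast : ((Real.exp (-θ) : ℝ) : ℂ) = ((Real.exp θ : ℂ))⁻¹ := by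
        rw [Real.exp_neg]; push_cast; ring
      rw [hu, hF]
      simp only [hcast]
      congr 1
      rw [mul_div_assoc, mul_div_assoc]
      congr 1
      have h2 : κ * c + (ς : ℂ) * r * ((Real.exp θ : ℂ))⁻¹
          = (κ * Real.exp θ * c + (ς : ℂ) * r) * ((Real.exp θ : ℂ))⁻¹ := by
        field_simp
        try ring
      have h3 : (starRingEnd ℂ) κ + (ς : ℂ) * r * ((Real.exp θ : ℂ))⁻¹
          = ((starRingEnd ℂ) κ * Real.exp θ + (ς : ℂ) * r) * ((Real.exp θ : ℂ))⁻¹ := by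
        field_simp
        try ring
      rw [h2, h3, mul_div_mul_right _ _ (inv_ne_zero he)]
    have hcont : ContinuousAt F 0 := by
      apply Complex.continuous_normSq.continuousAt.comp
      apply ContinuousAt.div
      · fun_prop
      · fun_prop
      · simpa using hconjκ
    have hF0 : F 0 = a ^ 2 := by
      rw [hF]
      simp only [Complex.ofReal_zero, mul_zero, add_zero]
      rw [Complex.normSq_div, Complex.normSq_mul, Complex.normSq_mul, hnc,
        Complex.normSq_conj, Complex.normSq_ofReal]
      field_simp
    have hmain := hcont.tendsto.comp (Real.tendsto_exp_atBot.comp tendsto_neg_atTop_atBot)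
    rw [hF0] at hmain
    simp only [key]
    exact hmain
  · -- atBot
    have key : ∀ θ : ℝ, Complex.normSq (u θ) = G (Real.exp θ) := by
      intro θ; rw [hu, hG]
    have hcont : ContinuousAt G 0 := by
      apply Complex.continuous_normSq.continuousAt.comp
      apply ContinuousAt.div
      · fun_prop
      · fun_prop
      · simpa using hden0
    have hG0 : G 0 = a ^ 2 := by
      rw [hG]
      simp only [Complex.ofReal_zero, mul_zero, zero_mul, zero_add, add_zero]
      rw [mul_div_assoc, div_self hden0, mul_one, Complex.normSq_ofReal]
      ring
    have hmain := hcont.tendsto.comp Real.tendsto_exp_atBot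
    rw [hG0] at hmain
    simp only [key]
    exact hmain
  · -- value at 0
    have hnum : κ * c + (ς : ℂ) * r
        = (κ * ((starRingEnd ℂ) κ + b) + (ς : ℂ) * r * (κ + b)) / (κ + b) := by
      rw [hc]; field_simp
    have hr2 : r ^ 2 = κ.re ^ 2 + κ.im ^ 2 := by
      rw [hrdef, Complex.sq_norm, Complex.normSq_apply]; ring
    have hpeak' : κ.re + ς * r ≠ 0 := hpeak
    rw [hu 0]
    simp only [Real.exp_zero, Complex.ofReal_one, mul_one]
    rw [hnum, Complex.sq_norm]
    rw [Complex.normSq_div, Complex.normSq_mul, Complex.normSq_div, Complex.normSq_ofReal]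
    have hNN : Complex.normSq (κ * ((starRingEnd ℂ) κ + b) + (ς : ℂ) * r * (κ + b))
        = 2 * ς * r * ((κ.re + ς * r) * Complex.normSq (κ + b) + 2 * b * κ.im ^ 2) := by
      simp only [Complex.normSq_apply, Complex.add_re, Complex.add_im, Complex.mul_re,
        Complex.mul_im, Complex.conj_re, Complex.conj_im, Complex.ofReal_re, Complex.ofReal_im]
      linear_combination (-(r ^ 2) * ((κ.re + b) ^ 2 + κ.im ^ 2)) * hς2
        - ((κ.re + b) ^ 2 + κ.im ^ 2) * hr2
    have hD2 : Complex.normSq ((starRingEnd ℂ) κ + (ς : ℂ) * r)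
        = 2 * ς * r * (κ.re + ς * r) := by
      simp only [Complex.normSq_apply, Complex.add_re, Complex.add_im, Complex.mul_re,
        Complex.mul_im, Complex.conj_re, Complex.conj_im, Complex.ofReal_re, Complex.ofReal_im]
      linear_combination (-1 : ℝ) * hr2 - r ^ 2 * hς2
    rw [hNN, hD2]
    field_simp [hnκb, hpeak', hςne, hr]
end

section
/- Under the plane-wave reduction, the functions ω₁ = b₁x - ½(2a₁² + σa₂² - 2/b₁ + σa₂²b₂/b₁)t and ω₂ = b₂x - ½(2σa₂² + a₁² - 2/b₂ + a₁²b₁/b₂)t make u₁ = a₁e^{iω₁}, u₂ = a₂e^{iω₂} an exact solution of the coupled Fokas-Lenells system u₁,xt + u₁ + i(|u₁|² + σ|u₂|²/2)u₁,x + (i/2)σu₁u₂*u₂,x = 0, u₂,xt + u₂ + i(σ|u₂|² + |u₁|²/2)u₂,x + (i/2)u₂u₁*u₁,x = 0. -/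
lemma hd17 (c : ℂ) (p q x : ℝ) :
    HasDerivAt (fun y : ℝ => c * Complex.exp (Complex.I * ((p * y + q : ℝ) : ℂ)))
      (c * (Complex.I * p) * Complex.exp (Complex.I * ((p * x + q : ℝ) : ℂ))) x := by
  have h1 : HasDerivAt (fun y : ℝ => ((y : ℂ))) 1 x := by
    have h := Complex.ofRealCLM.hasDerivAt (x := x); simp at h; exact h
  have h2 : HasDerivAt (fun y : ℝ => Complex.I * ((p*y+q:ℝ):ℂ)) (Complex.I * p) x := by
    have he : (fun y : ℝ => Complex.I * ((p*y+q:ℝ):ℂ))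
        = fun y : ℝ => (Complex.I*p) * (y:ℂ) + Complex.I*q := by
      funext y; push_cast; ring
    rw [he]
    simpa using ((h1.const_mul (Complex.I*(p:ℂ))).add_const (Complex.I*q))
  have h3 := (h2.cexp).const_mul c
  exact h3.congr_deriv (by ring)

lemma dv17 (c : ℂ) (p q x : ℝ) :
    deriv (fun y : ℝ => c * Complex.exp (Complex.I * ((p * y + q : ℝ) : ℂ))) x
      = c * (Complex.I * p) * Complex.exp (Complex.I * ((p * x + q : ℝ) : ℂ)) :=
  (hd17 c p q x).deriv


/-- The plane waves `u₁ = a₁e^{iω₁}`, `u₂ = a₂e^{iω₂}` with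
`ω₁ = b₁x - ½(2a₁² + σa₂² - 2/b₁ + σa₂²b₂/b₁)t` and
`ω₂ = b₂x - ½(2σa₂² + a₁² - 2/b₂ + a₁²b₁/b₂)t` solve the coupled Fokas-Lenells system
`u₁ₓₜ + u₁ + i(|u₁|² + σ|u₂|²/2)u₁ₓ + (i/2)σu₁u₂*u₂ₓ = 0`,
`u₂ₓₜ + u₂ + i(σ|u₂|² + |u₁|²/2)u₂ₓ + (i/2)u₂u₁*u₁ₓ = 0`. -/
theorem stmt17 (a₁ a₂ : ℝ) (b₁ b₂ : ℝ) (hb₁ : b₁ ≠ 0) (hb₂ : b₂ ≠ 0)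
    (σ : ℝ) (hσ : σ = 1 ∨ σ = -1) :
    let ω₁ : ℝ → ℝ → ℝ := fun x t =>
      b₁ * x - (1 / 2) * (2 * a₁ ^ 2 + σ * a₂ ^ 2 - 2 / b₁ + σ * a₂ ^ 2 * b₂ / b₁) * t
    let ω₂ : ℝ → ℝ → ℝ := fun x t =>
      b₂ * x - (1 / 2) * (2 * σ * a₂ ^ 2 + a₁ ^ 2 - 2 / b₂ + a₁ ^ 2 * b₁ / b₂) * t
    let u₁ : ℝ → ℝ → ℂ := fun x t => (a₁ : ℂ) * Complex.exp (Complex.I * (ω₁ x t))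
    let u₂ : ℝ → ℝ → ℂ := fun x t => (a₂ : ℂ) * Complex.exp (Complex.I * (ω₂ x t))
    ∀ x t : ℝ,
      (deriv (fun s => deriv (fun y => u₁ y s) x) t + u₁ x t
        + Complex.I * ((Complex.normSq (u₁ x t) : ℂ)
            + (1 / 2) * (σ : ℂ) * (Complex.normSq (u₂ x t) : ℂ))
          * deriv (fun y => u₁ y t) x
        + (Complex.I / 2) * (σ : ℂ) * u₁ x t * (starRingEnd ℂ) (u₂ x t)
          * deriv (fun y => u₂ y t) x = 0) ∧
      (deriv (fun s => deriv (fun y => u₂ y s) x) t + u₂ x t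
        + Complex.I * ((σ : ℂ) * (Complex.normSq (u₂ x t) : ℂ)
            + (1 / 2) * (Complex.normSq (u₁ x t) : ℂ))
          * deriv (fun y => u₂ y t) x
        + (Complex.I / 2) * u₂ x t * (starRingEnd ℂ) (u₁ x t)
          * deriv (fun y => u₁ y t) x = 0) := by
  intro ω₁ ω₂ u₁ u₂ x t
  set C₁ : ℝ := (1 / 2) * (2 * a₁ ^ 2 + σ * a₂ ^ 2 - 2 / b₁ + σ * a₂ ^ 2 * b₂ / b₁) with hC₁
  set C₂ : ℝ := (1 / 2) * (2 * σ * a₂ ^ 2 + a₁ ^ 2 - 2 / b₂ + a₁ ^ 2 * b₁ / b₂) with hC₂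
  -- first x-derivatives
  have e1x : ∀ s : ℝ, deriv (fun y => u₁ y s) x
      = (a₁:ℂ) * (Complex.I * b₁) * Complex.exp (Complex.I * ((b₁*x + -(C₁*s) : ℝ) : ℂ)) := by
    intro s
    have he : (fun y => u₁ y s) = fun y : ℝ => (a₁:ℂ) * Complex.exp (Complex.I * ((b₁*y + -(C₁*s) : ℝ) : ℂ)) := by
      funext y; simp only [u₁]; rw [show ω₁ y s = b₁*y + -(C₁*s) from by rw [hC₁]; simp only [ω₁]; ring]
    rw [he, dv17]
  have e2x : ∀ s : ℝ, deriv (fun y => u₂ y s) x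
      = (a₂:ℂ) * (Complex.I * b₂) * Complex.exp (Complex.I * ((b₂*x + -(C₂*s) : ℝ) : ℂ)) := by
    intro s
    have he : (fun y => u₂ y s) = fun y : ℝ => (a₂:ℂ) * Complex.exp (Complex.I * ((b₂*y + -(C₂*s) : ℝ) : ℂ)) := by
      funext y; simp only [u₂]; rw [show ω₂ y s = b₂*y + -(C₂*s) from by rw [hC₂]; simp only [ω₂]; ring]
    rw [he, dv17]
  -- mixed derivatives
  have e1xt : deriv (fun s => deriv (fun y => u₁ y s) x) t
      = ((a₁:ℂ) * (Complex.I * b₁)) * (Complex.I * (-C₁ : ℝ))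
        * Complex.exp (Complex.I * (((-C₁)*t + b₁*x : ℝ) : ℂ)) := by
    have he : (fun s => deriv (fun y => u₁ y s) x)
        = fun s : ℝ => ((a₁:ℂ) * (Complex.I * b₁)) * Complex.exp (Complex.I * (((-C₁)*s + b₁*x : ℝ) : ℂ)) := by
      funext s; rw [e1x s, show (b₁*x + -(C₁*s)) = ((-C₁)*s + b₁*x) from by ring]
    rw [he, dv17]
  have e2xt : deriv (fun s => deriv (fun y => u₂ y s) x) t
      = ((a₂:ℂ) * (Complex.I * b₂)) * (Complex.I * (-C₂ : ℝ))
        * Complex.exp (Complex.I * (((-C₂)*t + b₂*x : ℝ) : ℂ)) := by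
    have he : (fun s => deriv (fun y => u₂ y s) x)
        = fun s : ℝ => ((a₂:ℂ) * (Complex.I * b₂)) * Complex.exp (Complex.I * (((-C₂)*s + b₂*x : ℝ) : ℂ)) := by
      funext s; rw [e2x s, show (b₂*x + -(C₂*s)) = ((-C₂)*s + b₂*x) from by ring]
    rw [he, dv17]
  -- normSq and conj facts
  have n1 : (Complex.normSq (u₁ x t) : ℂ) = ((a₁:ℂ))^2 := by
    simp [u₁, Complex.normSq_mul, Complex.normSq_eq_norm_sq, mul_comm Complex.I,
      Complex.norm_exp_ofReal_mul_I]
  have n2 : (Complex.normSq (u₂ x t) : ℂ) = ((a₂:ℂ))^2 := by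
    simp [u₂, Complex.normSq_mul, Complex.normSq_eq_norm_sq, mul_comm Complex.I,
      Complex.norm_exp_ofReal_mul_I]
  have c1 : (starRingEnd ℂ) (u₁ x t) = (a₁:ℂ) * Complex.exp (-(Complex.I * ((ω₁ x t : ℝ) : ℂ))) := by
    simp [u₁, ← Complex.exp_conj, map_mul, Complex.conj_I, Complex.conj_ofReal]
  have c2 : (starRingEnd ℂ) (u₂ x t) = (a₂:ℂ) * Complex.exp (-(Complex.I * ((ω₂ x t : ℝ) : ℂ))) := by
    simp [u₂, ← Complex.exp_conj, map_mul, Complex.conj_I, Complex.conj_ofReal]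
  rw [e1x t, e2x t] at *
  have hb₁' : (b₁:ℂ) ≠ 0 := Complex.ofReal_ne_zero.mpr hb₁
  have hb₂' : (b₂:ℂ) ≠ 0 := Complex.ofReal_ne_zero.mpr hb₂
  have hv₁ : (C₁:ℂ) = (1 / 2) * (2 * (a₁:ℂ) ^ 2 + σ * a₂ ^ 2 - 2 / b₁ + σ * a₂ ^ 2 * b₂ / b₁) := by
    rw [hC₁]; push_cast; ring
  have hv₂ : (C₂:ℂ) = (1 / 2) * (2 * (σ:ℂ) * a₂ ^ 2 + a₁ ^ 2 - 2 / b₂ + a₁ ^ 2 * b₁ / b₂) := by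
    rw [hC₂]; push_cast; ring
  constructor
  · rw [e1xt, n1, n2, c2]
    simp only [u₁, u₂, ω₁, ω₂, ← hC₁, ← hC₂, Complex.exp_neg]
    rw [show ((-C₁)*t + b₁*x : ℝ) = b₁*x - C₁*t from by ring,
      show (b₁*x + -(C₁*t):ℝ) = b₁*x - C₁*t from by ring,
      show (b₂*x + -(C₂*t):ℝ) = b₂*x - C₂*t from by ring]
    set E₁ := Complex.exp (Complex.I * ((b₁*x - C₁*t : ℝ):ℂ)) with hE₁
    set E₂ := Complex.exp (Complex.I * ((b₂*x - C₂*t : ℝ):ℂ)) with hE₂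
    have hE2 : E₂ ≠ 0 := by rw [hE₂]; exact Complex.exp_ne_zero _
    push_cast
    field_simp
    ring_nf
    simp [Complex.I_sq]
    field_simp
    have hk : (b₁:ℂ) * C₁ = a₁^2*b₁ + σ*a₂^2*b₁/2 - 1 + σ*a₂^2*b₂/2 := by rw [hv₁]; field_simp
    linear_combination (2 * (a₁:ℂ) * E₁) * hk
  · rw [e2xt, n1, n2, c1]
    simp only [u₁, u₂, ω₁, ω₂, ← hC₁, ← hC₂, Complex.exp_neg]
    rw [show ((-C₂)*t + b₂*x : ℝ) = b₂*x - C₂*t from by ring,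
      show (b₂*x + -(C₂*t):ℝ) = b₂*x - C₂*t from by ring,
      show (b₁*x + -(C₁*t):ℝ) = b₁*x - C₁*t from by ring]
    set E₁ := Complex.exp (Complex.I * ((b₁*x - C₁*t : ℝ):ℂ)) with hE₁
    set E₂ := Complex.exp (Complex.I * ((b₂*x - C₂*t : ℝ):ℂ)) with hE₂
    have hE1 : E₁ ≠ 0 := by rw [hE₁]; exact Complex.exp_ne_zero _
    push_cast
    field_simp
    ring_nf
    simp [Complex.I_sq]
    field_simp
    have hk : (b₂:ℂ) * C₂ = σ*a₂^2*b₂ + a₁^2*b₂/2 - 1 + a₁^2*b₁/2 := by rw [hv₂]; field_simp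
    linear_combination (2 * (a₂:ℂ) * E₂) * hk
end
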